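/- (Lemma 4.1) Let λ ⊢ n, μ ⊢ n-1 with λ → μ, fix a λ-tableau t with 1 in the box λ\μ, let 2 ≤ l ≤ n and θ ∈ S_l. Then φ_{λ,μ}(θ) = (1/(n-1)_{l-1}) Σ_{γ,σ∈S_l : γσ=θ} sign(γ) N̂^{λ,μ}(γ,σ), where φ_{λ,μ} = (1/(n-1)!) Σ_{π∈S̃_{n-1}} π E_t π^{-1} and (n-1)_{l-1} = (n-1)(n-2)⋯(n-l+1) is the falling factorial. -/

import Mathlib

open scoped Classical

/-- `γ` belongs to the column stabilizer `C_t` of the tableau `t : Fin n ≃ lam.cells`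
(the entries `1,…,n` are encoded as `0,…,n-1 : Fin n`; a cell `(i, j)` lies in row `i` and
column `j`). -/
def InColStab {n : ℕ} (lam : YoungDiagram) (t : Fin n ≃ lam.cells)
    (γ : Equiv.Perm (Fin n)) : Prop :=
  ∀ m : Fin n, ((t (γ m)) : ℕ × ℕ).2 = ((t m) : ℕ × ℕ).2

/-- `σ` belongs to the row stabilizer `R_t` of the tableau `t : Fin n ≃ lam.cells`. -/
def InRowStab {n : ℕ} (lam : YoungDiagram) (t : Fin n ≃ lam.cells)
    (σ : Equiv.Perm (Fin n)) : Prop :=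
  ∀ m : Fin n, ((t (σ m)) : ℕ × ℕ).1 = ((t m) : ℕ × ℕ).1

open scoped Classical in
/-- The Young symmetrizer `E_t = ∑_{γ ∈ C_t} ∑_{σ ∈ R_t} sign(γ) γσ ∈ ℂ[S_n]`. -/
noncomputable def youngSym {n : ℕ} (lam : YoungDiagram) (t : Fin n ≃ lam.cells) :
    MonoidAlgebra ℂ (Equiv.Perm (Fin n)) :=
  ∑ γ : Equiv.Perm (Fin n), ∑ σ : Equiv.Perm (Fin n),
    if InColStab lam t γ ∧ InRowStab lam t σ then
      MonoidAlgebra.single (γ * σ) ((Equiv.Perm.sign γ : ℤ) : ℂ)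
    else 0

open scoped Classical in
/-- The generalized character `φ_{λ,μ} = (1/(n-1)!) ∑_{π ∈ S̃_{n-1}} π E_t π⁻¹ ∈ ℂ[S_n]`, where
`S̃_{n-1}` is the stabilizer of the point `1` (encoded as `0 : Fin n`), viewed as an element of
the group algebra, i.e. as a function on `S_n`. -/
noncomputable def genChar {n : ℕ} (lam : YoungDiagram) (t : Fin n ≃ lam.cells) :
    MonoidAlgebra ℂ (Equiv.Perm (Fin n)) :=
  ((n - 1).factorial : ℂ)⁻¹ •
    ∑ π : Equiv.Perm (Fin n),
      if ∀ i : Fin n, (i : ℕ) = 0 → π i = i then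
        MonoidAlgebra.of ℂ (Equiv.Perm (Fin n)) π * youngSym lam t *
          MonoidAlgebra.of ℂ (Equiv.Perm (Fin n)) π⁻¹
      else 0

/-- `N̂^{λ,μ}(γ,σ)`: the number of all (not necessarily injective) maps `f : {1,…,l} → λ` with
`f(1) = λ∖μ`, such that `c ∘ f` is constant on each cycle of `γ` and `r ∘ f` is constant on each
cycle of `σ`. -/
noncomputable def Nhat {n : ℕ} (lam : YoungDiagram) (box : lam.cells)
    (l : ℕ) (hl : l ≤ n) (γ σ : Equiv.Perm (Fin n)) : ℕ :=
  Nat.card {f : Fin l → lam.cells //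
    (∀ a : Fin l, (a : ℕ) = 0 → f a = box) ∧
    (∀ a b : Fin l, γ.SameCycle (Fin.castLE hl a) (Fin.castLE hl b) →
      ((f a) : ℕ × ℕ).2 = ((f b) : ℕ × ℕ).2) ∧
    (∀ a b : Fin l, σ.SameCycle (Fin.castLE hl a) (Fin.castLE hl b) →
      ((f a) : ℕ × ℕ).1 = ((f b) : ℕ × ℕ).1)}


section Aux

variable {n l : ℕ}

/-- invariance under all integer powers -/
lemma invar_inv {α : Type*} (e : Equiv.Perm α) (h : α → ℕ)
    (hpt : ∀ m, h (e m) = h m) : ∀ m, h (e⁻¹ m) = h m := by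
  intro m
  have := hpt (e⁻¹ m)
  rw [← Equiv.Perm.mul_apply, mul_inv_cancel, Equiv.Perm.one_apply] at this
  exact this.symm

lemma invar_pow {α : Type*} (e : Equiv.Perm α) (h : α → ℕ)
    (hpt : ∀ m, h (e m) = h m) : ∀ (k : ℕ) (m : α), h ((e ^ k) m) = h m := by
  intro k
  induction k with
  | zero => intro m; simp
  | succ k ih =>
      intro m
      rw [pow_succ, Equiv.Perm.mul_apply]
      exact (ih (e m)).trans (hpt m)

lemma invar_zpow {α : Type*} (e : Equiv.Perm α) (h : α → ℕ)
    (hpt : ∀ m, h (e m) = h m) : ∀ (k : ℤ) (m : α), h ((e ^ k) m) = h m := by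
  intro k m
  cases k with
  | ofNat k => rw [Int.ofNat_eq_coe, zpow_natCast]; exact invar_pow e h hpt k m
  | negSucc k =>
      rw [zpow_negSucc, ← inv_pow]
      exact invar_pow e⁻¹ h (invar_inv e h hpt) (k + 1) m

lemma maps_lt_of_fixtail (γ : Equiv.Perm (Fin n)) (hγ : ∀ i : Fin n, l ≤ (i : ℕ) → γ i = i)
    {m : Fin n} (hm : (m : ℕ) < l) : ((γ m : Fin n) : ℕ) < l := by
  by_contra h
  push_neg at h
  have h1 : γ (γ m) = γ m := hγ (γ m) h
  have h2 : γ m = m := γ.injective h1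
  rw [h2] at h
  omega

/-- truncation of a map on `Fin l` to a map on `Fin n` (with junk value `0` on the tail) -/
noncomputable def Hf (hln : l ≤ n) {α : Type*} (f : Fin l → α) (coord : α → ℕ) : Fin n → ℕ :=
  fun m => if h : (m : ℕ) < l then coord (f ⟨m, h⟩) else 0

lemma Hf_castLE (hln : l ≤ n) {α : Type*} (f : Fin l → α) (coord : α → ℕ) (a : Fin l) :
    Hf hln f coord (Fin.castLE hln a) = coord (f a) := by
  simp only [Hf]
  rw [dif_pos (show ((Fin.castLE hln a : Fin n) : ℕ) < l from a.isLt)]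
  exact congrArg coord (congrArg f (Fin.ext rfl))

lemma cond_iff_pt (hln : l ≤ n) {α : Type*} (γ : Equiv.Perm (Fin n))
    (hγ : ∀ i : Fin n, l ≤ (i : ℕ) → γ i = i) (f : Fin l → α) (coord : α → ℕ) :
    (∀ a b : Fin l, γ.SameCycle (Fin.castLE hln a) (Fin.castLE hln b) →
      coord (f a) = coord (f b)) ↔ (∀ m, Hf hln f coord (γ m) = Hf hln f coord m) := by
  constructor
  · intro h m
    by_cases hm : (m : ℕ) < l
    · have hγm : ((γ m : Fin n) : ℕ) < l := maps_lt_of_fixtail γ hγ hm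
      have e1 : Fin.castLE hln ⟨(m : ℕ), hm⟩ = m := rfl
      have e2 : Fin.castLE hln ⟨((γ m : Fin n) : ℕ), hγm⟩ = γ m := rfl
      have hsc : γ.SameCycle (Fin.castLE hln ⟨(m : ℕ), hm⟩)
          (Fin.castLE hln ⟨((γ m : Fin n) : ℕ), hγm⟩) := ⟨1, by rw [e1, e2, zpow_one]⟩
      have := h ⟨(m : ℕ), hm⟩ ⟨((γ m : Fin n) : ℕ), hγm⟩ hsc
      simp only [Hf, dif_pos hm, dif_pos hγm]
      exact this.symm
    · rw [hγ m (le_of_not_gt hm)]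
  · rintro h a b ⟨k, hk⟩
    have := invar_zpow γ (Hf hln f coord) h k (Fin.castLE hln a)
    rw [hk, Hf_castLE, Hf_castLE] at this
    exact this.symm

lemma pt_mul_swap {α : Type*} [DecidableEq α] (γ : Equiv.Perm α) (h : α → ℕ) {a b : α}
    (hab : h a = h b) (hpt : ∀ m, h (γ m) = h m) :
    ∀ m, h ((γ * Equiv.swap a b) m) = h m := by
  intro m
  rw [Equiv.Perm.mul_apply, hpt]
  rcases eq_or_ne m a with rfl | ha
  · rw [Equiv.swap_apply_left]; exact hab.symm
  rcases eq_or_ne m b with rfl | hb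
  · rw [Equiv.swap_apply_right]; exact hab
  · rw [Equiv.swap_apply_of_ne_of_ne ha hb]

lemma pt_swap_mul {α : Type*} [DecidableEq α] (σ : Equiv.Perm α) (h : α → ℕ) {a b : α}
    (hab : h a = h b) (hpt : ∀ m, h (σ m) = h m) :
    ∀ m, h ((Equiv.swap a b * σ) m) = h m := by
  intro m
  rw [Equiv.Perm.mul_apply]
  have key : h (Equiv.swap a b (σ m)) = h (σ m) := by
    rcases eq_or_ne (σ m) a with he | ha
    · rw [he, Equiv.swap_apply_left, ← hab]
    rcases eq_or_ne (σ m) b with he | hb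
    · rw [he, Equiv.swap_apply_right, hab]
    · rw [Equiv.swap_apply_of_ne_of_ne ha hb]
  rw [key, hpt]

lemma fixtail_mul_swap (γ : Equiv.Perm (Fin n)) (hγ : ∀ i : Fin n, l ≤ (i : ℕ) → γ i = i)
    {a b : Fin n} (ha : (a : ℕ) < l) (hb : (b : ℕ) < l) :
    ∀ i : Fin n, l ≤ (i : ℕ) → (γ * Equiv.swap a b) i = i := by
  intro i hi
  rw [Equiv.Perm.mul_apply,
    Equiv.swap_apply_of_ne_of_ne (fun h => by rw [h] at hi; omega)
      (fun h => by rw [h] at hi; omega)]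
  exact hγ i hi

lemma fixtail_swap_mul (σ : Equiv.Perm (Fin n)) (hσ : ∀ i : Fin n, l ≤ (i : ℕ) → σ i = i)
    {a b : Fin n} (ha : (a : ℕ) < l) (hb : (b : ℕ) < l) :
    ∀ i : Fin n, l ≤ (i : ℕ) → (Equiv.swap a b * σ) i = i := by
  intro i hi
  rw [Equiv.Perm.mul_apply, hσ i hi,
    Equiv.swap_apply_of_ne_of_ne (fun h => by rw [h] at hi; omega)
      (fun h => by rw [h] at hi; omega)]

lemma desc_mul_fact : ∀ (k m : ℕ), k ≤ m → m.descFactorial k * (m - k).factorial = m.factorial := by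
  intro k
  induction k with
  | zero => intro m _; simp
  | succ k ih =>
      intro m hk
      rw [Nat.descFactorial_succ]
      have h1 : m - k = (m - (k + 1)) + 1 := by omega
      have h2 := ih m (by omega)
      calc (m - k) * m.descFactorial k * (m - (k + 1)).factorial
          = m.descFactorial k * ((m - (k+1)) + 1).factorial := by
            rw [Nat.factorial_succ, ← h1]; ring
        _ = m.factorial := by rw [← h1, h2]

end Aux

lemma card_extensions {n l : ℕ} (hln : l ≤ n) {C : Type*} [Fintype C] [DecidableEq C]
    (hC : Fintype.card C = n) (f : Fin l → C) (hf : Function.Injective f) :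
    Fintype.card {g : Fin n ≃ C // ∀ a : Fin l, g (Fin.castLE hln a) = f a}
      = (n - l).factorial := by
  have hcast : Function.Injective (Fin.castLE hln : Fin l → Fin n) := Fin.castLE_injective hln
  set s : Set (Fin n) := Set.range (Fin.castLE hln) with hs
  set tt : Set C := Set.range f with htt
  let e₀ : s ≃ tt := (Equiv.ofInjective _ hcast).symm.trans (Equiv.ofInjective f hf)
  have he₀ : ∀ a : Fin l, (e₀ ⟨Fin.castLE hln a, Set.mem_range_self a⟩ : C) = f a := by
    intro a
    have h1 : (Equiv.ofInjective _ hcast).symm ⟨Fin.castLE hln a, Set.mem_range_self a⟩ = a := by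
      rw [Equiv.symm_apply_eq]
      rfl
    show ((Equiv.ofInjective f hf) ((Equiv.ofInjective _ hcast).symm
      ⟨Fin.castLE hln a, Set.mem_range_self a⟩) : C) = f a
    rw [h1]
    rfl
  have E1 : {g : Fin n ≃ C // ∀ a : Fin l, g (Fin.castLE hln a) = f a}
      ≃ {g : Fin n ≃ C // ∀ x : s, g x = e₀ x} := by
    refine Equiv.subtypeEquivRight fun g => ?_
    constructor
    · rintro h ⟨x, hx⟩
      obtain ⟨a, rfl⟩ := hx
      rw [show (⟨Fin.castLE hln a, ⟨a, rfl⟩⟩ : s) = ⟨Fin.castLE hln a, Set.mem_range_self a⟩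
        from rfl, he₀ a]
      exact h a
    · intro h a
      have := h ⟨Fin.castLE hln a, Set.mem_range_self a⟩
      rwa [he₀ a] at this
  have E2 := Equiv.Set.compl e₀
  have hcard1 : Fintype.card (sᶜ : Set (Fin n)) = n - l := by
    have h1 : Fintype.card s = l := by
      exact (Fintype.card_congr (Equiv.ofInjective _ hcast).symm).trans (Fintype.card_fin l)
    rw [Fintype.card_compl_set, h1, Fintype.card_fin]
  have hcard2 : Fintype.card (ttᶜ : Set C) = n - l := by
    have h1 : Fintype.card tt = l := by
      exact (Fintype.card_congr (Equiv.ofInjective f hf).symm).trans (Fintype.card_fin l)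
    rw [Fintype.card_compl_set, h1, hC]
  rw [Fintype.card_congr (E1.trans E2), Fintype.card_equiv
    (Fintype.equivOfCardEq (hcard1.trans hcard2.symm)), hcard1]

section Count

variable {n l : ℕ}

lemma hf_iff_g (hln : l ≤ n) {C : Type*} (coord : C → ℕ) (γ : Equiv.Perm (Fin n))
    (hγ : ∀ i : Fin n, l ≤ (i : ℕ) → γ i = i)
    (g : Fin n ≃ C) (f : Fin l → C) (hext : ∀ a : Fin l, g (Fin.castLE hln a) = f a) :
    (∀ m, coord (g (γ m)) = coord (g m)) ↔ (∀ m, Hf hln f coord (γ m) = Hf hln f coord m) := by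
  apply forall_congr'
  intro m
  by_cases hm : (m : ℕ) < l
  · have hγm := maps_lt_of_fixtail γ hγ hm
    have h1 : g (γ m) = f ⟨((γ m : Fin n) : ℕ), hγm⟩ := hext ⟨((γ m : Fin n) : ℕ), hγm⟩
    have h2 : g m = f ⟨(m : ℕ), hm⟩ := hext ⟨(m : ℕ), hm⟩
    simp only [Hf, dif_pos hm, dif_pos hγm, h1, h2]
  · rw [hγ m (le_of_not_gt hm)]
    simp

lemma card_pi_good (hl0 : 0 < l) (hln : l ≤ n) {C : Type*} [Fintype C] [DecidableEq C]
    (hC : Fintype.card C = n) (rw' cl : C → ℕ)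
    (box : C) (t : Fin n ≃ C) (ht : ∀ i : Fin n, (i : ℕ) = 0 → t i = box)
    (γ σ : Equiv.Perm (Fin n)) (hγ : ∀ i : Fin n, l ≤ (i : ℕ) → γ i = i)
    (hσ : ∀ i : Fin n, l ≤ (i : ℕ) → σ i = i) :
    Fintype.card {π : Equiv.Perm (Fin n) // (∀ i : Fin n, (i : ℕ) = 0 → π i = i) ∧
        (∀ m, cl (t (π⁻¹ (γ m))) = cl (t (π⁻¹ m))) ∧
        (∀ m, rw' (t (π⁻¹ (σ m))) = rw' (t (π⁻¹ m)))} =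
      (n - l).factorial * Fintype.card {f : Fin l → C //
        Function.Injective f ∧ (∀ a : Fin l, (a : ℕ) = 0 → f a = box) ∧
        (∀ m, Hf hln f cl (γ m) = Hf hln f cl m) ∧
        (∀ m, Hf hln f rw' (σ m) = Hf hln f rw' m)} := by
  have hn0 : 0 < n := lt_of_lt_of_le hl0 hln
  set z : Fin n := ⟨0, hn0⟩ with hz
  -- transfer to bijections g
  let eqv : Equiv.Perm (Fin n) ≃ (Fin n ≃ C) :=
    { toFun := fun π => π.symm.trans t
      invFun := fun g => (g.trans t.symm).symm
      left_inv := by intro π; ext m; simp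
      right_inv := by intro g; ext m; simp }
  have step1 : Fintype.card {π : Equiv.Perm (Fin n) // (∀ i : Fin n, (i : ℕ) = 0 → π i = i) ∧
        (∀ m, cl (t (π⁻¹ (γ m))) = cl (t (π⁻¹ m))) ∧
        (∀ m, rw' (t (π⁻¹ (σ m))) = rw' (t (π⁻¹ m)))} =
      Fintype.card {g : Fin n ≃ C // (∀ i : Fin n, (i : ℕ) = 0 → g i = box) ∧
        (∀ m, cl (g (γ m)) = cl (g m)) ∧ (∀ m, rw' (g (σ m)) = rw' (g m))} := by
    apply Fintype.card_congr
    apply Equiv.subtypeEquiv eqv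
    intro π
    have hiff : (∀ i : Fin n, (i : ℕ) = 0 → π i = i) ↔
        (∀ i : Fin n, (i : ℕ) = 0 → (eqv π) i = box) := by
      have e1 : (∀ i : Fin n, (i : ℕ) = 0 → π i = i) ↔ π z = z := by
        constructor
        · intro h; exact h z rfl
        · intro h i hi
          have : i = z := Fin.ext hi
          rw [this]; exact h
      have e2 : (∀ i : Fin n, (i : ℕ) = 0 → (eqv π) i = box) ↔ (eqv π) z = box := by
        constructor
        · intro h; exact h z rfl
        · intro h i hi
          have : i = z := Fin.ext hi
          rw [this]; exact h
      rw [e1, e2]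
      show π z = z ↔ t (π.symm z) = box
      rw [← ht z rfl]
      constructor
      · intro h
        have h2 : π.symm z = z := by rw [Equiv.symm_apply_eq]; exact h.symm
        rw [h2]
      · intro h
        have h2 := t.injective h
        rw [Equiv.symm_apply_eq] at h2
        exact h2.symm
    exact and_congr hiff (Iff.rfl.and Iff.rfl)
  rw [step1]
  -- fiberwise count over restrictions
  classical
  set P : (Fin n ≃ C) → Prop := fun g => (∀ i : Fin n, (i : ℕ) = 0 → g i = box) ∧
        (∀ m, cl (g (γ m)) = cl (g m)) ∧ (∀ m, rw' (g (σ m)) = rw' (g m)) with hP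
  set Q : (Fin l → C) → Prop := fun f => Function.Injective f ∧
        (∀ a : Fin l, (a : ℕ) = 0 → f a = box) ∧
        (∀ m, Hf hln f cl (γ m) = Hf hln f cl m) ∧
        (∀ m, Hf hln f rw' (σ m) = Hf hln f rw' m) with hQ
  set F : (Fin n ≃ C) → (Fin l → C) := fun g a => g (Fin.castLE hln a) with hF
  have key : ∀ f : Fin l → C,
      Fintype.card {g : Fin n ≃ C // P g ∧ F g = f} = if Q f then (n - l).factorial else 0 := by
    intro f
    by_cases hQf : Q f
    · rw [if_pos hQf]
      have e : {g : Fin n ≃ C // P g ∧ F g = f} ≃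
          {g : Fin n ≃ C // ∀ a : Fin l, g (Fin.castLE hln a) = f a} := by
        apply Equiv.subtypeEquivRight
        intro g
        constructor
        · intro h a; exact congrFun h.2 a
        · intro hext
          refine ⟨⟨?_, ?_, ?_⟩, funext hext⟩
          · intro i hi
            have : i = Fin.castLE hln ⟨0, hl0⟩ := Fin.ext hi
            rw [this, hext ⟨0, hl0⟩]
            exact hQf.2.1 ⟨0, hl0⟩ rfl
          · exact (hf_iff_g hln cl γ hγ g f hext).mpr hQf.2.2.1
          · exact (hf_iff_g hln rw' σ hσ g f hext).mpr hQf.2.2.2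
      rw [Fintype.card_congr e]
      exact card_extensions hln hC f hQf.1
    · rw [if_neg hQf]
      refine Fintype.card_eq_zero_iff.mpr ⟨?_⟩
      rintro ⟨g, hPg, hFg⟩
      apply hQf
      have hext : ∀ a : Fin l, g (Fin.castLE hln a) = f a := fun a => congrFun hFg a
      refine ⟨?_, ?_, ?_, ?_⟩
      · intro a b hab
        rw [← hext a, ← hext b] at hab
        exact Fin.castLE_injective hln (g.injective hab)
      · intro a ha
        rw [← hext a]
        exact hPg.1 (Fin.castLE hln a) (by simpa using ha)
      · exact (hf_iff_g hln cl γ hγ g f hext).mp hPg.2.1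
      · exact (hf_iff_g hln rw' σ hσ g f hext).mp hPg.2.2
  -- sum over fibers
  have main : Fintype.card {g : Fin n ≃ C // P g} =
      ∑ f : Fin l → C, Fintype.card {g : Fin n ≃ C // P g ∧ F g = f} := by
    rw [Fintype.card_subtype]
    rw [Finset.card_eq_sum_card_fiberwise
      (f := F) (t := Finset.univ) (fun x _ => Finset.mem_univ (F x))]
    refine Finset.sum_congr rfl fun f _ => ?_
    rw [Finset.filter_filter, Fintype.card_subtype]
  rw [main]
  have : ∀ f : Fin l → C, Fintype.card {g : Fin n ≃ C // P g ∧ F g = f}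
      = if Q f then (n - l).factorial else 0 := key
  rw [Finset.sum_congr rfl fun f _ => this f]
  rw [← Finset.sum_filter, Finset.sum_const, smul_eq_mul, Fintype.card_subtype, Nat.mul_comm]

lemma card_pi_bad (hln : l ≤ n) {C : Type*} [Fintype C] [DecidableEq C] (rw' cl : C → ℕ)
    (hsep : ∀ c c' : C, rw' c = rw' c' → cl c = cl c' → c = c')
    (t : Fin n ≃ C) (γ σ θ : Equiv.Perm (Fin n))
    (hθ : ∀ i : Fin n, l ≤ (i : ℕ) → θ i = i) (hmul : γ * σ = θ)
    (hbad : ¬((∀ i : Fin n, l ≤ (i : ℕ) → γ i = i) ∧ (∀ i : Fin n, l ≤ (i : ℕ) → σ i = i))) :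
    Fintype.card {π : Equiv.Perm (Fin n) // (∀ i : Fin n, (i : ℕ) = 0 → π i = i) ∧
        (∀ m, cl (t (π⁻¹ (γ m))) = cl (t (π⁻¹ m))) ∧
        (∀ m, rw' (t (π⁻¹ (σ m))) = rw' (t (π⁻¹ m)))} = 0 := by
  -- σ must move some tail point
  have hbadσ : ¬(∀ i : Fin n, l ≤ (i : ℕ) → σ i = i) := by
    intro hσ
    apply hbad
    refine ⟨fun i hi => ?_, hσ⟩
    have : γ (σ i) = i := by
      rw [← Equiv.Perm.mul_apply, hmul]; exact hθ i hi
    rw [hσ i hi] at this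
    exact this
  push_neg at hbadσ
  obtain ⟨p, hpl, hps⟩ := hbadσ
  refine Fintype.card_eq_zero_iff.mpr ⟨?_⟩
  rintro ⟨π, hZ, hcol, hrow⟩
  have h1 : rw' (t (π⁻¹ (σ p))) = rw' (t (π⁻¹ p)) := hrow p
  have h2 : cl (t (π⁻¹ (γ (σ p)))) = cl (t (π⁻¹ (σ p))) := hcol (σ p)
  have h3 : γ (σ p) = p := by
    rw [← Equiv.Perm.mul_apply, hmul]; exact hθ p hpl
  rw [h3] at h2
  have h4 : t (π⁻¹ (σ p)) = t (π⁻¹ p) := hsep _ _ h1 h2.symm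
  have h5 : σ p = p := (Equiv.injective π⁻¹) (t.injective h4)
  exact hps h5

end Count
set_option maxHeartbeats 2000000 in
/-- **Lemma 4.1.** Let `λ ⊢ n`, `μ ⊢ n-1` with `λ → μ`, fix a `λ`-tableau `t` with
`1` in the box `λ∖μ`, let `2 ≤ l ≤ n` and `θ ∈ S_l`.  Then
`φ_{λ,μ}(θ) = (1/(n-1)_{l-1}) ∑_{γ,σ ∈ S_l, γσ=θ} sign(γ) N̂^{λ,μ}(γ,σ)`, where
`(n-1)_{l-1} = (n-1)(n-2)⋯(n-l+1)` is the falling factorial. -/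
theorem genChar_eq_signed_sum_Nhat
    {n : ℕ} (hn : 2 ≤ n) (lam mu : YoungDiagram)
    (hlam : lam.card = n) (hmu : mu.card = n - 1) (hsub : mu ≤ lam)
    (box : lam.cells) (hbox : (box : ℕ × ℕ) ∉ mu)
    (t : Fin n ≃ lam.cells) (ht : ∀ i : Fin n, (i : ℕ) = 0 → t i = box)
    (l : ℕ) (hl2 : 2 ≤ l) (hln : l ≤ n)
    (θ : Equiv.Perm (Fin n)) (hθ : ∀ i : Fin n, l ≤ (i : ℕ) → θ i = i) :
    (genChar lam t).coeff θ =
      (((n - 1).descFactorial (l - 1) : ℕ) : ℂ)⁻¹ *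
        ∑ γ : Equiv.Perm (Fin n), ∑ σ : Equiv.Perm (Fin n),
          if (∀ i : Fin n, l ≤ (i : ℕ) → γ i = i) ∧ (∀ i : Fin n, l ≤ (i : ℕ) → σ i = i) ∧
              γ * σ = θ then
            ((Equiv.Perm.sign γ : ℤ) : ℂ) * (Nhat lam box l hln γ σ : ℂ)
          else 0 := by
  classical
  have hn0 : 0 < n := by omega
  have hl0 : 0 < l := by omega
  have hcells : Fintype.card lam.cells = n := by
    rw [Fintype.card_coe]; exact hlam
  have hsep : ∀ c c' : lam.cells, ((c : ℕ × ℕ)).1 = ((c' : ℕ × ℕ)).1 →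
      ((c : ℕ × ℕ)).2 = ((c' : ℕ × ℕ)).2 → c = c' := by
    intro c c' h1 h2
    exact Subtype.ext (Prod.ext h1 h2)
  -- Step A : unfold genChar
  have stepA : (genChar lam t).coeff θ = ((n - 1).factorial : ℂ)⁻¹ *
      ∑ π : Equiv.Perm (Fin n), if (∀ i : Fin n, (i : ℕ) = 0 → π i = i) then (youngSym lam t).coeff (π⁻¹ * θ * π) else 0 := by
    rw [genChar, MonoidAlgebra.coeff_smul_apply, smul_eq_mul]
    congr 1
    rw [MonoidAlgebra.coeff_sum, Finset.sum_apply']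
    refine Finset.sum_congr rfl fun π _ => ?_
    split_ifs with h
    · rw [MonoidAlgebra.of_apply, MonoidAlgebra.of_apply, MonoidAlgebra.coeff_mul_single_apply,
        MonoidAlgebra.coeff_single_mul_apply]
      rw [inv_inv, one_mul, mul_one, mul_assoc]
    · simp
  -- Step B : evaluate the Young symmetrizer
  have stepB : ∀ ρ : Equiv.Perm (Fin n), (youngSym lam t).coeff ρ =
      ∑ γ : Equiv.Perm (Fin n), ∑ σ : Equiv.Perm (Fin n),
        if InColStab lam t γ ∧ InRowStab lam t σ ∧ γ * σ = ρ then ((Equiv.Perm.sign γ : ℤ) : ℂ) else 0 := by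
    intro ρ
    rw [youngSym, MonoidAlgebra.coeff_sum, Finset.sum_apply']
    refine Finset.sum_congr rfl fun γ _ => ?_
    rw [MonoidAlgebra.coeff_sum, Finset.sum_apply']
    refine Finset.sum_congr rfl fun σ _ => ?_
    by_cases hA : InColStab lam t γ ∧ InRowStab lam t σ
    · rw [if_pos hA, MonoidAlgebra.coeff_single, Finsupp.single_apply]
      by_cases he : γ * σ = ρ
      · rw [if_pos he, if_pos ⟨hA.1, hA.2, he⟩]
      · rw [if_neg he, if_neg (by tauto)]
    · rw [if_neg hA, MonoidAlgebra.coeff_zero, Finsupp.zero_apply, if_neg (by tauto)]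
  -- Step C : conjugation change of variables
  have stepC : ∀ π : Equiv.Perm (Fin n), (youngSym lam t).coeff (π⁻¹ * θ * π) =
      ∑ γ : Equiv.Perm (Fin n), ∑ σ : Equiv.Perm (Fin n),
        if InColStab lam t (π⁻¹ * γ * π) ∧ InRowStab lam t (π⁻¹ * σ * π) ∧ γ * σ = θ
        then ((Equiv.Perm.sign γ : ℤ) : ℂ) else 0 := by
    intro π
    rw [stepB]
    refine Fintype.sum_equiv ((Equiv.mulLeft π).trans (Equiv.mulRight π⁻¹)) _ _ fun γ => ?_
    refine Fintype.sum_equiv ((Equiv.mulLeft π).trans (Equiv.mulRight π⁻¹)) _ _ fun σ => ?_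
    have h1 : π⁻¹ * (π * γ * π⁻¹) * π = γ := by group
    have h2 : π⁻¹ * (π * σ * π⁻¹) * π = σ := by group
    have h3 : ((π * γ * π⁻¹) * (π * σ * π⁻¹) = θ) ↔ (γ * σ = π⁻¹ * θ * π) := by
      constructor
      · intro h; rw [← h]; group
      · intro h
        rw [show (π * γ * π⁻¹) * (π * σ * π⁻¹) = π * (γ * σ) * π⁻¹ from by group, h]
        group
    have h4 : Equiv.Perm.sign (π * γ * π⁻¹) = Equiv.Perm.sign γ := by
      rw [map_mul, map_mul, map_inv, mul_comm (Equiv.Perm.sign π) (Equiv.Perm.sign γ), mul_assoc]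
      simp
    show (if InColStab lam t γ ∧ InRowStab lam t σ ∧ γ * σ = π⁻¹ * θ * π
        then ((Equiv.Perm.sign γ : ℤ) : ℂ) else 0) =
      (if InColStab lam t (π⁻¹ * (π * γ * π⁻¹) * π) ∧ InRowStab lam t (π⁻¹ * (π * σ * π⁻¹) * π) ∧
          (π * γ * π⁻¹) * (π * σ * π⁻¹) = θ
        then ((Equiv.Perm.sign (π * γ * π⁻¹) : ℤ) : ℂ) else 0)
    rw [h1, h2, h4]
    exact if_congr (and_congr Iff.rfl (and_congr Iff.rfl h3.symm)) rfl rfl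
  -- pointwise conjugated conditions
  have conjC : ∀ (coord : lam.cells → ℕ) (π ρ : Equiv.Perm (Fin n)),
      (∀ m, coord (t ((π⁻¹ * ρ * π) m)) = coord (t m)) ↔
      (∀ m, coord (t (π⁻¹ (ρ m))) = coord (t (π⁻¹ m))) := by
    intro coord π ρ
    constructor
    · intro h m
      have := h (π⁻¹ m)
      simpa [Equiv.Perm.mul_apply] using this
    · intro h m
      have := h (π m)
      simpa [Equiv.Perm.mul_apply] using this
  -- Step D : swap summation order, count the π's
  have stepD : (genChar lam t).coeff θ = ((n - 1).factorial : ℂ)⁻¹ *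
      ∑ γ : Equiv.Perm (Fin n), ∑ σ : Equiv.Perm (Fin n),
        if γ * σ = θ then ((Equiv.Perm.sign γ : ℤ) : ℂ) * ((Fintype.card {π : Equiv.Perm (Fin n) // (∀ i : Fin n, (i : ℕ) = 0 → π i = i) ∧ (∀ m, ((t (π⁻¹ (γ m))) : ℕ × ℕ).2 = ((t (π⁻¹ m)) : ℕ × ℕ).2) ∧ (∀ m, ((t (π⁻¹ (σ m))) : ℕ × ℕ).1 = ((t (π⁻¹ m)) : ℕ × ℕ).1)} : ℕ) : ℂ) else 0 := by
    rw [stepA]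
    congr 1
    calc ∑ π : Equiv.Perm (Fin n), (if (∀ i : Fin n, (i : ℕ) = 0 → π i = i) then (youngSym lam t).coeff (π⁻¹ * θ * π) else 0)
        = ∑ π : Equiv.Perm (Fin n), ∑ γ : Equiv.Perm (Fin n), ∑ σ : Equiv.Perm (Fin n),
            (if (∀ i : Fin n, (i : ℕ) = 0 → π i = i) ∧ InColStab lam t (π⁻¹ * γ * π) ∧ InRowStab lam t (π⁻¹ * σ * π) ∧
              γ * σ = θ then ((Equiv.Perm.sign γ : ℤ) : ℂ) else 0) := by
          refine Finset.sum_congr rfl fun π _ => ?_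
          by_cases hZ : (∀ i : Fin n, (i : ℕ) = 0 → π i = i)
          · rw [if_pos hZ, stepC π]
            refine Finset.sum_congr rfl fun γ _ => Finset.sum_congr rfl fun σ _ => ?_
            exact if_congr (by tauto) rfl rfl
          · rw [if_neg hZ]
            symm
            refine Finset.sum_eq_zero fun γ _ => Finset.sum_eq_zero fun σ _ => ?_
            exact if_neg (by tauto)
      _ = ∑ γ : Equiv.Perm (Fin n), ∑ σ : Equiv.Perm (Fin n), ∑ π : Equiv.Perm (Fin n),
            (if (∀ i : Fin n, (i : ℕ) = 0 → π i = i) ∧ InColStab lam t (π⁻¹ * γ * π) ∧ InRowStab lam t (π⁻¹ * σ * π) ∧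
              γ * σ = θ then ((Equiv.Perm.sign γ : ℤ) : ℂ) else 0) := by
          rw [Finset.sum_comm]
          exact Finset.sum_congr rfl fun γ _ => Finset.sum_comm
      _ = ∑ γ : Equiv.Perm (Fin n), ∑ σ : Equiv.Perm (Fin n),
            (if γ * σ = θ then ((Equiv.Perm.sign γ : ℤ) : ℂ) * ((Fintype.card {π : Equiv.Perm (Fin n) // (∀ i : Fin n, (i : ℕ) = 0 → π i = i) ∧ (∀ m, ((t (π⁻¹ (γ m))) : ℕ × ℕ).2 = ((t (π⁻¹ m)) : ℕ × ℕ).2) ∧ (∀ m, ((t (π⁻¹ (σ m))) : ℕ × ℕ).1 = ((t (π⁻¹ m)) : ℕ × ℕ).1)} : ℕ) : ℂ) else 0) := by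
          refine Finset.sum_congr rfl fun γ _ => Finset.sum_congr rfl fun σ _ => ?_
          by_cases hmul : γ * σ = θ
          · rw [if_pos hmul]
            have hiff : ∀ π : Equiv.Perm (Fin n),
                ((∀ i : Fin n, (i : ℕ) = 0 → π i = i) ∧ InColStab lam t (π⁻¹ * γ * π) ∧ InRowStab lam t (π⁻¹ * σ * π) ∧
                  γ * σ = θ) ↔ ((∀ i : Fin n, (i : ℕ) = 0 → π i = i) ∧ (∀ m, ((t (π⁻¹ (γ m))) : ℕ × ℕ).2 = ((t (π⁻¹ m)) : ℕ × ℕ).2) ∧ (∀ m, ((t (π⁻¹ (σ m))) : ℕ × ℕ).1 = ((t (π⁻¹ m)) : ℕ × ℕ).1)) := by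
              intro π
              constructor
              · rintro ⟨a, b, c, -⟩
                exact ⟨a, (conjC (fun c : lam.cells => ((c : ℕ × ℕ)).2) π γ).mp b, (conjC (fun c : lam.cells => ((c : ℕ × ℕ)).1) π σ).mp c⟩
              · rintro ⟨a, b, c⟩
                exact ⟨a, (conjC (fun c : lam.cells => ((c : ℕ × ℕ)).2) π γ).mpr b, (conjC (fun c : lam.cells => ((c : ℕ × ℕ)).1) π σ).mpr c, hmul⟩
            calc ∑ π : Equiv.Perm (Fin n),
                  (if (∀ i : Fin n, (i : ℕ) = 0 → π i = i) ∧ InColStab lam t (π⁻¹ * γ * π) ∧ InRowStab lam t (π⁻¹ * σ * π) ∧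
                    γ * σ = θ then ((Equiv.Perm.sign γ : ℤ) : ℂ) else 0)
                = ∑ π : Equiv.Perm (Fin n),
                    ((Equiv.Perm.sign γ : ℤ) : ℂ) * (if (∀ i : Fin n, (i : ℕ) = 0 → π i = i) ∧ (∀ m, ((t (π⁻¹ (γ m))) : ℕ × ℕ).2 = ((t (π⁻¹ m)) : ℕ × ℕ).2) ∧ (∀ m, ((t (π⁻¹ (σ m))) : ℕ × ℕ).1 = ((t (π⁻¹ m)) : ℕ × ℕ).1) then (1 : ℂ) else 0) := by
                  refine Finset.sum_congr rfl fun π _ => ?_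
                  rw [if_congr (hiff π) rfl rfl]
                  split_ifs <;> simp
              _ = ((Equiv.Perm.sign γ : ℤ) : ℂ) * ((Fintype.card {π : Equiv.Perm (Fin n) // (∀ i : Fin n, (i : ℕ) = 0 → π i = i) ∧ (∀ m, ((t (π⁻¹ (γ m))) : ℕ × ℕ).2 = ((t (π⁻¹ m)) : ℕ × ℕ).2) ∧ (∀ m, ((t (π⁻¹ (σ m))) : ℕ × ℕ).1 = ((t (π⁻¹ m)) : ℕ × ℕ).1)} : ℕ) : ℂ) := by
                  rw [← Finset.mul_sum, Finset.sum_boole, Fintype.card_subtype]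
          · rw [if_neg hmul]
            refine Finset.sum_eq_zero fun π _ => if_neg (by tauto)
  -- Step E : identify the number of π's
  have stepE : ∀ γ σ : Equiv.Perm (Fin n), γ * σ = θ →
      Fintype.card {π : Equiv.Perm (Fin n) // (∀ i : Fin n, (i : ℕ) = 0 → π i = i) ∧ (∀ m, ((t (π⁻¹ (γ m))) : ℕ × ℕ).2 = ((t (π⁻¹ m)) : ℕ × ℕ).2) ∧ (∀ m, ((t (π⁻¹ (σ m))) : ℕ × ℕ).1 = ((t (π⁻¹ m)) : ℕ × ℕ).1)} = if (∀ i : Fin n, l ≤ (i : ℕ) → γ i = i) ∧ (∀ i : Fin n, l ≤ (i : ℕ) → σ i = i) then (n - l).factorial * Fintype.card {f : Fin l → lam.cells // Function.Injective f ∧ (∀ a : Fin l, (a : ℕ) = 0 → f a = box) ∧ (∀ m, Hf hln f (fun c : lam.cells => ((c : ℕ × ℕ)).2) (γ m) = Hf hln f (fun c : lam.cells => ((c : ℕ × ℕ)).2) m) ∧ (∀ m, Hf hln f (fun c : lam.cells => ((c : ℕ × ℕ)).1) (σ m) = Hf hln f (fun c : lam.cells => ((c : ℕ × ℕ)).1)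 m)} else 0 := by
    intro γ σ hmul
    by_cases hfix : (∀ i : Fin n, l ≤ (i : ℕ) → γ i = i) ∧ (∀ i : Fin n, l ≤ (i : ℕ) → σ i = i)
    · rw [if_pos hfix]
      exact card_pi_good hl0 hln hcells (fun c : lam.cells => ((c : ℕ × ℕ)).1) (fun c : lam.cells => ((c : ℕ × ℕ)).2) box t ht γ σ hfix.1 hfix.2
    · rw [if_neg hfix]
      exact card_pi_bad hln (fun c : lam.cells => ((c : ℕ × ℕ)).1) (fun c : lam.cells => ((c : ℕ × ℕ)).2) hsep t γ σ θ hθ hmul hfix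
    -- split the count into injective and non-injective parts
  have hsplit : ∀ γ σ : Equiv.Perm (Fin n), Fintype.card {f : Fin l → lam.cells // (∀ a : Fin l, (a : ℕ) = 0 → f a = box) ∧ (∀ m, Hf hln f (fun c : lam.cells => ((c : ℕ × ℕ)).2) (γ m) = Hf hln f (fun c : lam.cells => ((c : ℕ × ℕ)).2) m) ∧ (∀ m, Hf hln f (fun c : lam.cells => ((c : ℕ × ℕ)).1) (σ m) = Hf hln f (fun c : lam.cells => ((c : ℕ × ℕ)).1) m)} = Fintype.card {f : Fin l → lam.cells // Function.Injective f ∧ (∀ a : Fin l, (a : ℕ) = 0 → f a = box) ∧ (∀ m, Hf hln f (fun c : lam.cells => ((c : ℕ × ℕ)).2) (γ m) = Hf hln f (fun c : lam.cells => ((c : ℕ × ℕ)).2) m) ∧ (∀ m, Hf hln f (fun c : lam.cells => ((c : ℕ × ℕ)).1) (σ m) = Hf hln f (fun c : lam.cells => ((c : ℕ × ℕ)).1) m)} + Fintype.card {f : Fin l → lam.cells // ¬Function.Injective f ∧ (∀ a : Fin l, (a : ℕ) = 0 → f a = box) ∧ (∀ m, Hf hln f (fun c : lam.cells => ((c : ℕ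 × ℕ)).2) (γ m) = Hf hln f (fun c : lam.cells => ((c : ℕ × ℕ)).2) m) ∧ (∀ m, Hf hln f (fun c : lam.cells => ((c : ℕ × ℕ)).1) (σ m) = Hf hln f (fun c : lam.cells => ((c : ℕ × ℕ)).1) m)} := by
    intro γ σ
    rw [Fintype.card_subtype, Fintype.card_subtype, Fintype.card_subtype,
      ← Finset.card_filter_add_card_filter_not
        (s := (Finset.univ : Finset (Fin l → lam.cells)).filter
          (fun f => (∀ a : Fin l, (a : ℕ) = 0 → f a = box) ∧ (∀ m, Hf hln f (fun c : lam.cells => ((c : ℕ × ℕ)).2) (γ m) = Hf hln f (fun c : lam.cells => ((c : ℕ × ℕ)).2) m) ∧ (∀ m, Hf hln f (fun c : lam.cells => ((c : ℕ × ℕ)).1) (σ m) = Hf hln f (fun c : lam.cells => ((c : ℕ × ℕ)).1) m)))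
        (p := fun f => Function.Injective f)]
    congr 1
    · rw [Finset.filter_filter]
      exact congrArg Finset.card (Finset.filter_congr fun f _ => by tauto)
    · rw [Finset.filter_filter]
      exact congrArg Finset.card (Finset.filter_congr fun f _ => by tauto)
  -- identify Nhat
  have hNhat : ∀ γ σ : Equiv.Perm (Fin n), (∀ i : Fin n, l ≤ (i : ℕ) → γ i = i) → (∀ i : Fin n, l ≤ (i : ℕ) → σ i = i) →
      Nhat lam box l hln γ σ = Fintype.card {f : Fin l → lam.cells // (∀ a : Fin l, (a : ℕ) = 0 → f a = box) ∧ (∀ m, Hf hln f (fun c : lam.cells => ((c : ℕ × ℕ)).2) (γ m) = Hf hln f (fun c : lam.cells => ((c : ℕ × ℕ)).2) m) ∧ (∀ m, Hf hln f (fun c : lam.cells => ((c : ℕ × ℕ)).1) (σ m) = Hf hln f (fun c : lam.cells => ((c : ℕ × ℕ)).1) m)} := by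
    intro γ σ hγ hσ
    rw [Nhat, Nat.card_eq_fintype_card]
    apply Fintype.card_congr
    apply Equiv.subtypeEquivRight
    intro f
    exact and_congr Iff.rfl (and_congr (cond_iff_pt hln γ hγ f (fun c : lam.cells => ((c : ℕ × ℕ)).2)) (cond_iff_pt hln σ hσ f (fun c : lam.cells => ((c : ℕ × ℕ)).1)))
  -- the signed sum over non-injective fillings vanishes (sign-reversing involution)
  have hzero : ∑ γ : Equiv.Perm (Fin n), ∑ σ : Equiv.Perm (Fin n),
      (if ((∀ i : Fin n, l ≤ (i : ℕ) → γ i = i) ∧ (∀ i : Fin n, l ≤ (i : ℕ) → σ i = i) ∧ γ * σ = θ) then ((Equiv.Perm.sign γ : ℤ) : ℂ) * ((Fintype.card {f : Fin l → lam.cells // ¬Function.Injective f ∧ (∀ a : Fin l, (a : ℕ) = 0 → f a = box) ∧ (∀ m, Hf hln f (fun c : lam.cells => ((c : ℕ × ℕ)).2) (γ m) = Hf hln f (fun c : lam.cells => ((c : ℕ × ℕ)).2) m) ∧ (∀ m, Hf hln f (fun c : lam.cells => ((c : ℕ × ℕ)).1) (σ m) = Hf hln f (fun c : lam.cells => ((c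 : ℕ × ℕ)).1) m)} : ℕ) : ℂ) else 0) = 0 := by
    set prf : (Fin l → lam.cells) → Fin l × Fin l := fun f =>
      if h : ∃ p : Fin l × Fin l, p.1 ≠ p.2 ∧ f p.1 = f p.2 then Classical.choose h
      else (⟨0, hl0⟩, ⟨0, hl0⟩) with hprf
    have prf_spec : ∀ f : Fin l → lam.cells, ¬Function.Injective f →
        (prf f).1 ≠ (prf f).2 ∧ f (prf f).1 = f (prf f).2 := by
      intro f hf
      have hex : ∃ p : Fin l × Fin l, p.1 ≠ p.2 ∧ f p.1 = f p.2 := by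
        rw [Function.not_injective_iff] at hf
        obtain ⟨a, b, h1, h2⟩ := hf
        exact ⟨(a, b), h2, h1⟩
      rw [hprf]
      dsimp only
      rw [dif_pos hex]
      exact Classical.choose_spec hex
    have tau_lt1 : ∀ f : Fin l → lam.cells, ((Fin.castLE hln (prf f).1 : Fin n) : ℕ) < l :=
      fun f => (prf f).1.isLt
    have tau_lt2 : ∀ f : Fin l → lam.cells, ((Fin.castLE hln (prf f).2 : Fin n) : ℕ) < l :=
      fun f => (prf f).2.isLt
    have tau_ne : ∀ f : Fin l → lam.cells, ¬Function.Injective f →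
        Fin.castLE hln (prf f).1 ≠ Fin.castLE hln (prf f).2 :=
      fun f hf h => (prf_spec f hf).1 (Fin.castLE_injective hln h)
    have tau_hf : ∀ (f : Fin l → lam.cells) (coord : lam.cells → ℕ), ¬Function.Injective f →
        Hf hln f coord (Fin.castLE hln (prf f).1) = Hf hln f coord (Fin.castLE hln (prf f).2) := by
      intro f coord hf
      rw [Hf_castLE, Hf_castLE, (prf_spec f hf).2]
    -- rewrite as a triple sum
    have step1 : ∀ γ σ : Equiv.Perm (Fin n),
        (if ((∀ i : Fin n, l ≤ (i : ℕ) → γ i = i) ∧ (∀ i : Fin n, l ≤ (i : ℕ) → σ i = i) ∧ γ * σ = θ) then ((Equiv.Perm.sign γ : ℤ) : ℂ) * ((Fintype.card {f : Fin l → lam.cells // ¬Function.Injective f ∧ (∀ a : Fin l, (a : ℕ) = 0 → f a = box) ∧ (∀ m, Hf hln f (fun c : lam.cells => ((c : ℕ × ℕ)).2) (γ m) = Hf hln f (fun c : lam.cells => ((c : ℕ × ℕ)).2) m) ∧ (∀ m, Hf hln f (fun c : lam.cells => ((c : ℕ × ℕ)).1) (σ m) = Hf hln f (fun c : lam.cells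 => ((c : ℕ × ℕ)).1) m)} : ℕ) : ℂ) else 0)
        = ∑ f : Fin l → lam.cells, (if (((∀ i : Fin n, l ≤ (i : ℕ) → γ i = i) ∧ (∀ i : Fin n, l ≤ (i : ℕ) → σ i = i) ∧ γ * σ = θ) ∧ (¬Function.Injective f ∧ (∀ a : Fin l, (a : ℕ) = 0 → f a = box) ∧ (∀ m, Hf hln f (fun c : lam.cells => ((c : ℕ × ℕ)).2) (γ m) = Hf hln f (fun c : lam.cells => ((c : ℕ × ℕ)).2) m) ∧ (∀ m, Hf hln f (fun c : lam.cells => ((c : ℕ × ℕ)).1) (σ m) = Hf hln f (fun c : lam.cells => ((c : ℕ × ℕ)).1) m))) then ((Equiv.Perm.sign γ : ℤ) : ℂ) else 0) := by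
      intro γ σ
      by_cases hP : ((∀ i : Fin n, l ≤ (i : ℕ) → γ i = i) ∧ (∀ i : Fin n, l ≤ (i : ℕ) → σ i = i) ∧ γ * σ = θ)
      · rw [if_pos hP]
        have hc : ((Fintype.card {f : Fin l → lam.cells // ¬Function.Injective f ∧ (∀ a : Fin l, (a : ℕ) = 0 → f a = box) ∧ (∀ m, Hf hln f (fun c : lam.cells => ((c : ℕ × ℕ)).2) (γ m) = Hf hln f (fun c : lam.cells => ((c : ℕ × ℕ)).2) m) ∧ (∀ m, Hf hln f (fun c : lam.cells => ((c : ℕ × ℕ)).1) (σ m) = Hf hln f (fun c : lam.cells => ((c : ℕ × ℕ)).1) m)} : ℕ) : ℂ)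
            = ∑ f : Fin l → lam.cells, (if (¬Function.Injective f ∧ (∀ a : Fin l, (a : ℕ) = 0 → f a = box) ∧ (∀ m, Hf hln f (fun c : lam.cells => ((c : ℕ × ℕ)).2) (γ m) = Hf hln f (fun c : lam.cells => ((c : ℕ × ℕ)).2) m) ∧ (∀ m, Hf hln f (fun c : lam.cells => ((c : ℕ × ℕ)).1) (σ m) = Hf hln f (fun c : lam.cells => ((c : ℕ × ℕ)).1) m)) then (1 : ℂ) else 0) := by
          rw [Fintype.card_subtype, ← Finset.sum_boole]
        rw [hc, Finset.mul_sum]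
        refine Finset.sum_congr rfl fun f _ => ?_
        by_cases hNC : (¬Function.Injective f ∧ (∀ a : Fin l, (a : ℕ) = 0 → f a = box) ∧ (∀ m, Hf hln f (fun c : lam.cells => ((c : ℕ × ℕ)).2) (γ m) = Hf hln f (fun c : lam.cells => ((c : ℕ × ℕ)).2) m) ∧ (∀ m, Hf hln f (fun c : lam.cells => ((c : ℕ × ℕ)).1) (σ m) = Hf hln f (fun c : lam.cells => ((c : ℕ × ℕ)).1) m))
        · rw [if_pos hNC, if_pos ⟨hP, hNC⟩, mul_one]
        · rw [if_neg hNC, if_neg (by tauto), mul_zero]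
      · rw [if_neg hP]
        symm
        exact Finset.sum_eq_zero fun f _ => if_neg (by tauto)
    rw [Finset.sum_congr rfl fun γ _ => Finset.sum_congr rfl fun σ _ => step1 γ σ]
    have step2 : ∑ x : Equiv.Perm (Fin n) × Equiv.Perm (Fin n) × (Fin l → lam.cells),
        (if (((∀ i : Fin n, l ≤ (i : ℕ) → x.1 i = i) ∧ (∀ i : Fin n, l ≤ (i : ℕ) → x.2.1 i = i) ∧ x.1 * x.2.1 = θ) ∧ (¬Function.Injective x.2.2 ∧ (∀ a : Fin l, (a : ℕ) = 0 → x.2.2 a = box) ∧ (∀ m, Hf hln x.2.2 (fun c : lam.cells => ((c : ℕ × ℕ)).2) (x.1 m) = Hf hln x.2.2 (fun c : lam.cells => ((c : ℕ × ℕ)).2) m) ∧ (∀ m, Hf hln x.2.2 (fun c : lam.cells => ((c : ℕ × ℕ)).1) (x.2.1 m) = Hf hln x.2.2 (fun c : lam.cells => ((c : ℕ × ℕ)).1) m))) then ((Equiv.Perm.sign x.1 : ℤ) : ℂ) else 0)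
        = ∑ γ : Equiv.Perm (Fin n), ∑ σ : Equiv.Perm (Fin n), ∑ f : Fin l → lam.cells,
            (if (((∀ i : Fin n, l ≤ (i : ℕ) → γ i = i) ∧ (∀ i : Fin n, l ≤ (i : ℕ) → σ i = i) ∧ γ * σ = θ) ∧ (¬Function.Injective f ∧ (∀ a : Fin l, (a : ℕ) = 0 → f a = box) ∧ (∀ m, Hf hln f (fun c : lam.cells => ((c : ℕ × ℕ)).2) (γ m) = Hf hln f (fun c : lam.cells => ((c : ℕ × ℕ)).2) m) ∧ (∀ m, Hf hln f (fun c : lam.cells => ((c : ℕ × ℕ)).1) (σ m) = Hf hln f (fun c : lam.cells => ((c : ℕ × ℕ)).1) m))) then ((Equiv.Perm.sign γ : ℤ) : ℂ) else 0) := by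
      rw [Fintype.sum_prod_type]
      refine Finset.sum_congr rfl fun γ _ => ?_
      rw [Fintype.sum_prod_type]
    rw [← step2]
    -- the conditions are preserved by the swap move
    have move_cond : ∀ x : Equiv.Perm (Fin n) × Equiv.Perm (Fin n) × (Fin l → lam.cells), (((∀ i : Fin n, l ≤ (i : ℕ) → x.1 i = i) ∧ (∀ i : Fin n, l ≤ (i : ℕ) → x.2.1 i = i) ∧ x.1 * x.2.1 = θ) ∧ (¬Function.Injective x.2.2 ∧ (∀ a : Fin l, (a : ℕ) = 0 → x.2.2 a = box) ∧ (∀ m, Hf hln x.2.2 (fun c : lam.cells => ((c : ℕ × ℕ)).2) (x.1 m) = Hf hln x.2.2 (fun c : lam.cells => ((c : ℕ × ℕ)).2) m) ∧ (∀ m, Hf hln x.2.2 (fun c : lam.cells => ((c : ℕ × ℕ)).1) (x.2.1 m) = Hf hln x.2.2 (fun c : lam.cells => ((c : ℕ × ℕ)).1) m))) →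
        (((∀ i : Fin n, l ≤ (i : ℕ) → (x.1 * Equiv.swap (Fin.castLE hln (prf x.2.2).1) (Fin.castLE hln (prf x.2.2).2)) i = i) ∧ (∀ i : Fin n, l ≤ (i : ℕ) → (Equiv.swap (Fin.castLE hln (prf x.2.2).1) (Fin.castLE hln (prf x.2.2).2) * x.2.1) i = i) ∧ (x.1 * Equiv.swap (Fin.castLE hln (prf x.2.2).1) (Fin.castLE hln (prf x.2.2).2)) * (Equiv.swap (Fin.castLE hln (prf x.2.2).1) (Fin.castLE hln (prf x.2.2).2) * x.2.1) = θ) ∧ (¬Function.Injective x.2.2 ∧ (∀ a : Fin l, (a : ℕ) = 0 → x.2.2 a = box) ∧ (∀ m, Hf hln x.2.2 (fun c : lam.cells => ((c : ℕ × ℕ)).2) ((x.1 * Equiv.swap (Fin.castLE hln (prf x.2.2).1) (Fin.castLE hln (prf x.2.2).2)) m) = Hf hln x.2.2 (fun c : lam.cells => ((c : ℕ × ℕ)).2) m) ∧ (∀ m, Hf hln x.2.2 (fun c : lam.cells => ((c : ℕ × ℕ)).1) ((Equiv.swap (Fin.castLE hln (prf x.2.2).1) (Fin.castLE hln (prf x.2.2).2)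 * x.2.1) m) = Hf hln x.2.2 (fun c : lam.cells => ((c : ℕ × ℕ)).1) m))) := by
      rintro ⟨γ, σ, f⟩ ⟨⟨h1, h2, h3⟩, h4, h5, h6, h7⟩
      dsimp only at *
      refine ⟨⟨?_, ?_, ?_⟩, h4, h5, ?_, ?_⟩
      · exact fixtail_mul_swap γ h1 (tau_lt1 f) (tau_lt2 f)
      · exact fixtail_swap_mul σ h2 (tau_lt1 f) (tau_lt2 f)
      · rw [mul_assoc, ← mul_assoc (Equiv.swap (Fin.castLE hln (prf f).1) (Fin.castLE hln (prf f).2)) (Equiv.swap (Fin.castLE hln (prf f).1) (Fin.castLE hln (prf f).2)) σ, Equiv.swap_mul_self, one_mul, h3]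
      · exact pt_mul_swap γ (Hf hln f (fun c : lam.cells => ((c : ℕ × ℕ)).2)) (tau_hf f (fun c : lam.cells => ((c : ℕ × ℕ)).2) h4) h6
      · exact pt_swap_mul σ (Hf hln f (fun c : lam.cells => ((c : ℕ × ℕ)).1)) (tau_hf f (fun c : lam.cells => ((c : ℕ × ℕ)).1) h4) h7
    refine Finset.sum_ninvolution
      (fun x => if (((∀ i : Fin n, l ≤ (i : ℕ) → x.1 i = i) ∧ (∀ i : Fin n, l ≤ (i : ℕ) → x.2.1 i = i) ∧ x.1 * x.2.1 = θ) ∧ (¬Function.Injective x.2.2 ∧ (∀ a : Fin l, (a : ℕ) = 0 → x.2.2 a = box) ∧ (∀ m, Hf hln x.2.2 (fun c : lam.cells => ((c : ℕ × ℕ)).2) (x.1 m) = Hf hln x.2.2 (fun c : lam.cells => ((c : ℕ × ℕ)).2) m) ∧ (∀ m, Hf hln x.2.2 (fun c : lam.cells => ((c : ℕ × ℕ)).1) (x.2.1 m) = Hf hln x.2.2 (fun c : lam.cells => ((c : ℕ × ℕ)).1) m)))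
        then (x.1 * Equiv.swap (Fin.castLE hln (prf x.2.2).1) (Fin.castLE hln (prf x.2.2).2), Equiv.swap (Fin.castLE hln (prf x.2.2).1) (Fin.castLE hln (prf x.2.2).2) * x.2.1, x.2.2) else x)
      ?_ ?_ (fun a => Finset.mem_univ _) ?_
    · -- sums to zero in pairs
      intro x
      by_cases hc : (((∀ i : Fin n, l ≤ (i : ℕ) → x.1 i = i) ∧ (∀ i : Fin n, l ≤ (i : ℕ) → x.2.1 i = i) ∧ x.1 * x.2.1 = θ) ∧ (¬Function.Injective x.2.2 ∧ (∀ a : Fin l, (a : ℕ) = 0 → x.2.2 a = box) ∧ (∀ m, Hf hln x.2.2 (fun c : lam.cells => ((c : ℕ × ℕ)).2) (x.1 m) = Hf hln x.2.2 (fun c : lam.cells => ((c : ℕ × ℕ)).2) m) ∧ (∀ m, Hf hln x.2.2 (fun c : lam.cells => ((c : ℕ × ℕ)).1) (x.2.1 m) = Hf hln x.2.2 (fun c : lam.cells => ((c : ℕ × ℕ)).1) m)))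
      · have hc2 := move_cond x hc
        rw [if_pos hc, if_pos hc]
        dsimp only
        rw [if_pos hc2]
        have hs : (Equiv.Perm.sign (x.1 * Equiv.swap (Fin.castLE hln (prf x.2.2).1) (Fin.castLE hln (prf x.2.2).2)) : ℤ)
            = -(Equiv.Perm.sign x.1 : ℤ) := by
          rw [map_mul, Equiv.Perm.sign_swap (tau_ne x.2.2 hc.2.1)]
          simp
        rw [hs]
        push_cast
        ring
      · rw [if_neg hc, if_neg hc, if_neg hc]
        ring
    · -- the move is nontrivial where the summand is nonzero
      intro x hW
      have hc : (((∀ i : Fin n, l ≤ (i : ℕ) → x.1 i = i) ∧ (∀ i : Fin n, l ≤ (i : ℕ) → x.2.1 i = i) ∧ x.1 * x.2.1 = θ) ∧ (¬Function.Injective x.2.2 ∧ (∀ a : Fin l, (a : ℕ) = 0 → x.2.2 a = box) ∧ (∀ m, Hf hln x.2.2 (fun c : lam.cells => ((c : ℕ × ℕ)).2) (x.1 m) = Hf hln x.2.2 (fun c : lam.cells => ((c : ℕ × ℕ)).2) m) ∧ (∀ m, Hf hln x.2.2 (fun c : lam.cells => ((c : ℕ × ℕ)).1) (x.2.1 m)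 = Hf hln x.2.2 (fun c : lam.cells => ((c : ℕ × ℕ)).1) m))) := by
        by_contra h
        exact hW (if_neg h)
      rw [if_pos hc]
      intro hEq
      have h1 : x.1 * Equiv.swap (Fin.castLE hln (prf x.2.2).1) (Fin.castLE hln (prf x.2.2).2) = x.1 := congrArg Prod.fst hEq
      have h2 : Equiv.swap (Fin.castLE hln (prf x.2.2).1) (Fin.castLE hln (prf x.2.2).2) = 1 := mul_left_cancel (h1.trans (mul_one x.1).symm)
      have h3 := congrArg (fun π : Equiv.Perm (Fin n) => π (Fin.castLE hln (prf x.2.2).1)) h2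
      simp only [Equiv.swap_apply_left, Equiv.Perm.coe_one, id_eq] at h3
      exact tau_ne x.2.2 hc.2.1 h3.symm
    · -- involutive
      intro x
      by_cases hc : (((∀ i : Fin n, l ≤ (i : ℕ) → x.1 i = i) ∧ (∀ i : Fin n, l ≤ (i : ℕ) → x.2.1 i = i) ∧ x.1 * x.2.1 = θ) ∧ (¬Function.Injective x.2.2 ∧ (∀ a : Fin l, (a : ℕ) = 0 → x.2.2 a = box) ∧ (∀ m, Hf hln x.2.2 (fun c : lam.cells => ((c : ℕ × ℕ)).2) (x.1 m) = Hf hln x.2.2 (fun c : lam.cells => ((c : ℕ × ℕ)).2) m) ∧ (∀ m, Hf hln x.2.2 (fun c : lam.cells => ((c : ℕ × ℕ)).1) (x.2.1 m) = Hf hln x.2.2 (fun c : lam.cells => ((c : ℕ × ℕ)).1) m)))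
      · have hc2 := move_cond x hc
        rw [if_pos hc]
        dsimp only
        rw [if_pos hc2]
        refine Prod.ext ?_ (Prod.ext ?_ rfl)
        · show x.1 * Equiv.swap (Fin.castLE hln (prf x.2.2).1) (Fin.castLE hln (prf x.2.2).2) * Equiv.swap (Fin.castLE hln (prf x.2.2).1) (Fin.castLE hln (prf x.2.2).2) = x.1
          rw [mul_assoc, Equiv.swap_mul_self, mul_one]
        · show Equiv.swap (Fin.castLE hln (prf x.2.2).1) (Fin.castLE hln (prf x.2.2).2) * (Equiv.swap (Fin.castLE hln (prf x.2.2).1) (Fin.castLE hln (prf x.2.2).2) * x.2.1) = x.2.1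
          rw [← mul_assoc, Equiv.swap_mul_self, one_mul]
      · rw [if_neg hc, if_neg hc]
  -- final assembly
  rw [stepD]
  have hNN : ∑ γ : Equiv.Perm (Fin n), ∑ σ : Equiv.Perm (Fin n),
        (if ((∀ i : Fin n, l ≤ (i : ℕ) → γ i = i) ∧ (∀ i : Fin n, l ≤ (i : ℕ) → σ i = i) ∧ γ * σ = θ) then ((Equiv.Perm.sign γ : ℤ) : ℂ) * ((Fintype.card {f : Fin l → lam.cells // (∀ a : Fin l, (a : ℕ) = 0 → f a = box) ∧ (∀ m, Hf hln f (fun c : lam.cells => ((c : ℕ × ℕ)).2) (γ m) = Hf hln f (fun c : lam.cells => ((c : ℕ × ℕ)).2) m) ∧ (∀ m, Hf hln f (fun c : lam.cells => ((c : ℕ × ℕ)).1) (σ m) = Hf hln f (fun c : lam.cells => ((c : ℕ × ℕ)).1) m)} : ℕ) : ℂ) else 0)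
      = ∑ γ : Equiv.Perm (Fin n), ∑ σ : Equiv.Perm (Fin n),
        (if ((∀ i : Fin n, l ≤ (i : ℕ) → γ i = i) ∧ (∀ i : Fin n, l ≤ (i : ℕ) → σ i = i) ∧ γ * σ = θ) then ((Equiv.Perm.sign γ : ℤ) : ℂ) * ((Fintype.card {f : Fin l → lam.cells // Function.Injective f ∧ (∀ a : Fin l, (a : ℕ) = 0 → f a = box) ∧ (∀ m, Hf hln f (fun c : lam.cells => ((c : ℕ × ℕ)).2) (γ m) = Hf hln f (fun c : lam.cells => ((c : ℕ × ℕ)).2) m) ∧ (∀ m, Hf hln f (fun c : lam.cells => ((c : ℕ × ℕ)).1) (σ m) = Hf hln f (fun c : lam.cells => ((c : ℕ × ℕ)).1) m)} : ℕ) : ℂ) else 0) := by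
    have expand : ∀ γ σ : Equiv.Perm (Fin n),
        (if ((∀ i : Fin n, l ≤ (i : ℕ) → γ i = i) ∧ (∀ i : Fin n, l ≤ (i : ℕ) → σ i = i) ∧ γ * σ = θ) then ((Equiv.Perm.sign γ : ℤ) : ℂ) * ((Fintype.card {f : Fin l → lam.cells // (∀ a : Fin l, (a : ℕ) = 0 → f a = box) ∧ (∀ m, Hf hln f (fun c : lam.cells => ((c : ℕ × ℕ)).2) (γ m) = Hf hln f (fun c : lam.cells => ((c : ℕ × ℕ)).2) m) ∧ (∀ m, Hf hln f (fun c : lam.cells => ((c : ℕ × ℕ)).1) (σ m) = Hf hln f (fun c : lam.cells => ((c : ℕ × ℕ)).1) m)} : ℕ) : ℂ) else 0)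
        = (if ((∀ i : Fin n, l ≤ (i : ℕ) → γ i = i) ∧ (∀ i : Fin n, l ≤ (i : ℕ) → σ i = i) ∧ γ * σ = θ) then ((Equiv.Perm.sign γ : ℤ) : ℂ) * ((Fintype.card {f : Fin l → lam.cells // Function.Injective f ∧ (∀ a : Fin l, (a : ℕ) = 0 → f a = box) ∧ (∀ m, Hf hln f (fun c : lam.cells => ((c : ℕ × ℕ)).2) (γ m) = Hf hln f (fun c : lam.cells => ((c : ℕ × ℕ)).2) m) ∧ (∀ m, Hf hln f (fun c : lam.cells => ((c : ℕ × ℕ)).1) (σ m) = Hf hln f (fun c : lam.cells => ((c : ℕ × ℕ)).1) m)} : ℕ) : ℂ) else 0)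
          + (if ((∀ i : Fin n, l ≤ (i : ℕ) → γ i = i) ∧ (∀ i : Fin n, l ≤ (i : ℕ) → σ i = i) ∧ γ * σ = θ) then ((Equiv.Perm.sign γ : ℤ) : ℂ) * ((Fintype.card {f : Fin l → lam.cells // ¬Function.Injective f ∧ (∀ a : Fin l, (a : ℕ) = 0 → f a = box) ∧ (∀ m, Hf hln f (fun c : lam.cells => ((c : ℕ × ℕ)).2) (γ m) = Hf hln f (fun c : lam.cells => ((c : ℕ × ℕ)).2) m) ∧ (∀ m, Hf hln f (fun c : lam.cells => ((c : ℕ × ℕ)).1) (σ m) = Hf hln f (fun c : lam.cells => ((c : ℕ × ℕ)).1) m)} : ℕ) : ℂ) else 0) := by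
      intro γ σ
      by_cases hP : ((∀ i : Fin n, l ≤ (i : ℕ) → γ i = i) ∧ (∀ i : Fin n, l ≤ (i : ℕ) → σ i = i) ∧ γ * σ = θ)
      · rw [if_pos hP, if_pos hP, if_pos hP, hsplit γ σ]
        push_cast
        ring
      · rw [if_neg hP, if_neg hP, if_neg hP]
        ring
    calc ∑ γ : Equiv.Perm (Fin n), ∑ σ : Equiv.Perm (Fin n),
          (if ((∀ i : Fin n, l ≤ (i : ℕ) → γ i = i) ∧ (∀ i : Fin n, l ≤ (i : ℕ) → σ i = i) ∧ γ * σ = θ) then ((Equiv.Perm.sign γ : ℤ) : ℂ) * ((Fintype.card {f : Fin l → lam.cells // (∀ a : Fin l, (a : ℕ) = 0 → f a = box) ∧ (∀ m, Hf hln f (fun c : lam.cells => ((c : ℕ × ℕ)).2) (γ m) = Hf hln f (fun c : lam.cells => ((c : ℕ × ℕ)).2) m) ∧ (∀ m, Hf hln f (fun c : lam.cells => ((c : ℕ × ℕ)).1) (σ m) = Hf hln f (fun c : lam.cells => ((c : ℕ × ℕ)).1) m)} : ℕ) : ℂ) else 0)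
        = (∑ γ : Equiv.Perm (Fin n), ∑ σ : Equiv.Perm (Fin n),
            (if ((∀ i : Fin n, l ≤ (i : ℕ) → γ i = i) ∧ (∀ i : Fin n, l ≤ (i : ℕ) → σ i = i) ∧ γ * σ = θ) then ((Equiv.Perm.sign γ : ℤ) : ℂ) * ((Fintype.card {f : Fin l → lam.cells // Function.Injective f ∧ (∀ a : Fin l, (a : ℕ) = 0 → f a = box) ∧ (∀ m, Hf hln f (fun c : lam.cells => ((c : ℕ × ℕ)).2) (γ m) = Hf hln f (fun c : lam.cells => ((c : ℕ × ℕ)).2) m) ∧ (∀ m, Hf hln f (fun c : lam.cells => ((c : ℕ × ℕ)).1) (σ m) = Hf hln f (fun c : lam.cells => ((c : ℕ × ℕ)).1) m)} : ℕ) : ℂ) else 0))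
          + ∑ γ : Equiv.Perm (Fin n), ∑ σ : Equiv.Perm (Fin n),
            (if ((∀ i : Fin n, l ≤ (i : ℕ) → γ i = i) ∧ (∀ i : Fin n, l ≤ (i : ℕ) → σ i = i) ∧ γ * σ = θ) then ((Equiv.Perm.sign γ : ℤ) : ℂ) * ((Fintype.card {f : Fin l → lam.cells // ¬Function.Injective f ∧ (∀ a : Fin l, (a : ℕ) = 0 → f a = box) ∧ (∀ m, Hf hln f (fun c : lam.cells => ((c : ℕ × ℕ)).2) (γ m) = Hf hln f (fun c : lam.cells => ((c : ℕ × ℕ)).2) m) ∧ (∀ m, Hf hln f (fun c : lam.cells => ((c : ℕ × ℕ)).1) (σ m) = Hf hln f (fun c : lam.cells => ((c : ℕ × ℕ)).1) m)} : ℕ) : ℂ) else 0) := by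
          rw [← Finset.sum_add_distrib]
          refine Finset.sum_congr rfl fun γ _ => ?_
          rw [← Finset.sum_add_distrib]
          exact Finset.sum_congr rfl fun σ _ => expand γ σ
      _ = ∑ γ : Equiv.Perm (Fin n), ∑ σ : Equiv.Perm (Fin n),
            (if ((∀ i : Fin n, l ≤ (i : ℕ) → γ i = i) ∧ (∀ i : Fin n, l ≤ (i : ℕ) → σ i = i) ∧ γ * σ = θ) then ((Equiv.Perm.sign γ : ℤ) : ℂ) * ((Fintype.card {f : Fin l → lam.cells // Function.Injective f ∧ (∀ a : Fin l, (a : ℕ) = 0 → f a = box) ∧ (∀ m, Hf hln f (fun c : lam.cells => ((c : ℕ × ℕ)).2) (γ m) = Hf hln f (fun c : lam.cells => ((c : ℕ × ℕ)).2) m) ∧ (∀ m, Hf hln f (fun c : lam.cells => ((c : ℕ × ℕ)).1) (σ m) = Hf hln f (fun c : lam.cells => ((c : ℕ × ℕ)).1) m)} : ℕ) : ℂ) else 0) := by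
          rw [hzero, add_zero]
  calc ((n - 1).factorial : ℂ)⁻¹ * ∑ γ : Equiv.Perm (Fin n), ∑ σ : Equiv.Perm (Fin n),
        (if γ * σ = θ then ((Equiv.Perm.sign γ : ℤ) : ℂ) * ((Fintype.card {π : Equiv.Perm (Fin n) // (∀ i : Fin n, (i : ℕ) = 0 → π i = i) ∧ (∀ m, ((t (π⁻¹ (γ m))) : ℕ × ℕ).2 = ((t (π⁻¹ m)) : ℕ × ℕ).2) ∧ (∀ m, ((t (π⁻¹ (σ m))) : ℕ × ℕ).1 = ((t (π⁻¹ m)) : ℕ × ℕ).1)} : ℕ) : ℂ) else 0)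
      = ((n - 1).factorial : ℂ)⁻¹ * ∑ γ : Equiv.Perm (Fin n), ∑ σ : Equiv.Perm (Fin n),
        (((n - l).factorial : ℂ) *
          (if ((∀ i : Fin n, l ≤ (i : ℕ) → γ i = i) ∧ (∀ i : Fin n, l ≤ (i : ℕ) → σ i = i) ∧ γ * σ = θ) then ((Equiv.Perm.sign γ : ℤ) : ℂ) * ((Fintype.card {f : Fin l → lam.cells // Function.Injective f ∧ (∀ a : Fin l, (a : ℕ) = 0 → f a = box) ∧ (∀ m, Hf hln f (fun c : lam.cells => ((c : ℕ × ℕ)).2) (γ m) = Hf hln f (fun c : lam.cells => ((c : ℕ × ℕ)).2) m) ∧ (∀ m, Hf hln f (fun c : lam.cells => ((c : ℕ × ℕ)).1) (σ m) = Hf hln f (fun c : lam.cells => ((c : ℕ × ℕ)).1) m)} : ℕ) : ℂ) else 0)) := by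
        congr 1
        refine Finset.sum_congr rfl fun γ _ => Finset.sum_congr rfl fun σ _ => ?_
        by_cases hmul : γ * σ = θ
        · rw [if_pos hmul, stepE γ σ hmul]
          by_cases hfix : (∀ i : Fin n, l ≤ (i : ℕ) → γ i = i) ∧ (∀ i : Fin n, l ≤ (i : ℕ) → σ i = i)
          · rw [if_pos hfix, if_pos ⟨hfix.1, hfix.2, hmul⟩]
            push_cast
            ring
          · rw [if_neg hfix, if_neg (by tauto)]
            simp
        · rw [if_neg hmul, if_neg (by tauto)]
          simp
    _ = ((n - 1).factorial : ℂ)⁻¹ * (((n - l).factorial : ℂ) * ∑ γ : Equiv.Perm (Fin n), ∑ σ : Equiv.Perm (Fin n),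
          (if ((∀ i : Fin n, l ≤ (i : ℕ) → γ i = i) ∧ (∀ i : Fin n, l ≤ (i : ℕ) → σ i = i) ∧ γ * σ = θ) then ((Equiv.Perm.sign γ : ℤ) : ℂ) * ((Fintype.card {f : Fin l → lam.cells // Function.Injective f ∧ (∀ a : Fin l, (a : ℕ) = 0 → f a = box) ∧ (∀ m, Hf hln f (fun c : lam.cells => ((c : ℕ × ℕ)).2) (γ m) = Hf hln f (fun c : lam.cells => ((c : ℕ × ℕ)).2) m) ∧ (∀ m, Hf hln f (fun c : lam.cells => ((c : ℕ × ℕ)).1) (σ m) = Hf hln f (fun c : lam.cells => ((c : ℕ × ℕ)).1) m)} : ℕ) : ℂ) else 0)) := by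
        congr 1
        rw [Finset.mul_sum]
        refine Finset.sum_congr rfl fun γ _ => ?_
        rw [Finset.mul_sum]
    _ = ((n - 1).factorial : ℂ)⁻¹ * (((n - l).factorial : ℂ) * ∑ γ : Equiv.Perm (Fin n), ∑ σ : Equiv.Perm (Fin n),
          (if ((∀ i : Fin n, l ≤ (i : ℕ) → γ i = i) ∧ (∀ i : Fin n, l ≤ (i : ℕ) → σ i = i) ∧ γ * σ = θ) then ((Equiv.Perm.sign γ : ℤ) : ℂ) * ((Nhat lam box l hln γ σ : ℕ) : ℂ) else 0)) := by
        rw [← hNN]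
        congr 2
        refine Finset.sum_congr rfl fun γ _ => Finset.sum_congr rfl fun σ _ => ?_
        by_cases hP : ((∀ i : Fin n, l ≤ (i : ℕ) → γ i = i) ∧ (∀ i : Fin n, l ≤ (i : ℕ) → σ i = i) ∧ γ * σ = θ)
        · rw [if_pos hP, if_pos hP, hNhat γ σ hP.1 hP.2.1]
        · rw [if_neg hP, if_neg hP]
    _ = (((n - 1).descFactorial (l - 1) : ℕ) : ℂ)⁻¹ * ∑ γ : Equiv.Perm (Fin n), ∑ σ : Equiv.Perm (Fin n),
          (if ((∀ i : Fin n, l ≤ (i : ℕ) → γ i = i) ∧ (∀ i : Fin n, l ≤ (i : ℕ) → σ i = i) ∧ γ * σ = θ) then ((Equiv.Perm.sign γ : ℤ) : ℂ) * ((Nhat lam box l hln γ σ : ℕ) : ℂ) else 0) := by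
        rw [← mul_assoc]
        congr 1
        have hd := desc_mul_fact (l - 1) (n - 1) (by omega)
        rw [show n - 1 - (l - 1) = n - l from by omega] at hd
        have hdesc0 : (((n - 1).descFactorial (l - 1) : ℕ) : ℂ) ≠ 0 := by
          rw [Nat.cast_ne_zero]
          intro h0
          rw [Nat.descFactorial_eq_zero_iff_lt] at h0
          omega
        have hf1 : ((n - 1).factorial : ℂ) ≠ 0 := Nat.cast_ne_zero.mpr (Nat.factorial_ne_zero _)
        have hf2 : ((n - l).factorial : ℂ) ≠ 0 := Nat.cast_ne_zero.mpr (Nat.factorial_ne_zero _)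
        field_simp
        rw [← hd]
        push_cast
        ring
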